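/- Let X be a compact subset of ℝ^N equipped with a finite positive Borel measure μ, and let (T_n) be a sequence of weakly nonlinear (sublinear and translatable) and monotone operators from C(X), the continuous real-valued functions on X, into itself. Assume that for each of the test functions h ∈ {1, pr_1, …, pr_N, −pr_1, …, −pr_N, Σ_{k=1}^N pr_k²} (restricted to X) and every ε > 0 one has μ({x ∈ X : |T_n(h)(x) − h(x)| ≥ ε}) → 0 as n → ∞. Then for every f ∈ C(X) and every ε > 0, μ({x ∈ X : |T_n(f)(x) − f(x)| ≥ ε}) → 0 as n → ∞. -/

import Mathlib

open MeasureTheory Filter Topology Set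

private lemma T_sum_le' {Y : Type*} [TopologicalSpace Y] {ι : Type*}
    (T : C(Y, ℝ) → C(Y, ℝ)) (h0 : T 0 = 0)
    (hadd : ∀ f g, T (f + g) ≤ T f + T g) (s : Finset ι) (g : ι → C(Y, ℝ)) :
    T (∑ i ∈ s, g i) ≤ ∑ i ∈ s, T (g i) := by
  classical
  induction s using Finset.induction with
  | empty => simp [h0]
  | insert _ _ hx ih =>
    rw [Finset.sum_insert hx, Finset.sum_insert hx]
    exact (hadd _ _).trans (add_le_add_right ih _)

set_option maxHeartbeats 2000000 in
/-- **Theorem `thm-measure`, second part.** Korovkin-type theorem for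
convergence in measure: weakly nonlinear (sublinear and translatable) and monotone
operators on `C(X)`, `X` a compact subset of `ℝ^N` with a finite Borel measure `μ`,
test functions `1, ±pr_1, …, ±pr_N, Σ pr_k²`; conclusion for every `f ∈ C(X)`. -/
theorem korovkin_inMeasure_weaklyNonlinear {N : ℕ} (X : Set (Fin N → ℝ)) [CompactSpace X]
    (μ : Measure X) [IsFiniteMeasure μ]
    (T : ℕ → C(X, ℝ) → C(X, ℝ))
    (hsubadd : ∀ n, ∀ f g : C(X, ℝ), T n (f + g) ≤ T n f + T n g)
    (hhom : ∀ n, ∀ (α : ℝ), 0 ≤ α → ∀ f : C(X, ℝ), T n (α • f) = α • T n f)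
    (hmono : ∀ n, ∀ f g : C(X, ℝ), f ≤ g → T n f ≤ T n g)
    (htrans : ∀ n, ∀ f : C(X, ℝ), ∀ (α : ℝ), 0 ≤ α →
      T n (f + α • (1 : C(X, ℝ))) = T n f + α • T n (1 : C(X, ℝ)))
    -- convergence in measure for each test function
    (htest : ∀ h : C(X, ℝ),
      ((⇑h = fun _ => (1 : ℝ)) ∨
        (∃ k : Fin N, ⇑h = fun x : X => (x : Fin N → ℝ) k) ∨
        (∃ k : Fin N, ⇑h = fun x : X => -((x : Fin N → ℝ) k)) ∨
        (⇑h = fun x : X => ∑ k, ((x : Fin N → ℝ) k) ^ 2)) →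
      ∀ ε : ℝ, 0 < ε →
        Tendsto (fun n => μ {x | ε ≤ |T n h x - h x|}) atTop (𝓝 0))
    (f : C(X, ℝ)) :
    ∀ ε : ℝ, 0 < ε →
      Tendsto (fun n => μ {x | ε ≤ |T n f x - f x|}) atTop (𝓝 0) := by
  classical
  intro ε₀ hε₀
  -- test functions
  set p : Fin N → C(X, ℝ) := fun k =>
    ⟨fun x => (x : Fin N → ℝ) k, (continuous_apply k).comp continuous_subtype_val⟩ with hpdef
  set m : Fin N → C(X, ℝ) := fun k => -(p k) with hmdef
  set q : C(X, ℝ) := ⟨fun x => ∑ k, ((x : Fin N → ℝ) k) ^ 2, by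
    exact continuous_finset_sum _ fun k _ =>
      ((continuous_apply k).comp continuous_subtype_val).pow 2⟩ with hqdef
  -- basic operator facts
  have hT0 : ∀ n, T n 0 = 0 := by
    intro n
    have := hhom n 0 le_rfl 0
    simpa using this
  have hT1nn : ∀ n (x : X), 0 ≤ T n 1 x := by
    intro n x
    have h01 : (0 : C(X, ℝ)) ≤ 1 := by
      rw [ContinuousMap.le_def]; intro a; simp
    have := ContinuousMap.le_def.mp (hmono n 0 1 h01) x
    rwa [hT0 n] at this
  -- coordinate bound
  obtain ⟨R, hR0, hR⟩ : ∃ R : ℝ, 0 < R ∧ ∀ (k : Fin N) (x : X), |(x : Fin N → ℝ) k| ≤ R := by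
    refine ⟨(∑ k, ‖p k‖) + 1, by positivity, fun k x => ?_⟩
    have h1 : |(x : Fin N → ℝ) k| ≤ ‖p k‖ := by
      have h := (p k).norm_coe_le_norm x
      rw [Real.norm_eq_abs] at h
      exact h
    have h2 : ‖p k‖ ≤ ∑ j, ‖p j‖ :=
      Finset.single_le_sum (fun j _ => norm_nonneg _) (Finset.mem_univ k)
    linarith
  set M : ℝ := ‖f‖ with hMdef
  have hM0 : 0 ≤ M := norm_nonneg f
  have hfM : ∀ x : X, |f x| ≤ M := fun x => by
    simpa [Real.norm_eq_abs] using f.norm_coe_le_norm x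
  -- error functions
  set D : C(X, ℝ) → ℕ → X → ℝ := fun h n x => |T n h x - h x| with hDdef
  set S : ℕ → X → ℝ := fun n x =>
    D 1 n x + D q n x + ∑ k, (D (p k) n x + D (m k) n x) with hSdef
  have hDnn : ∀ h n x, 0 ≤ D h n x := fun h n x => abs_nonneg _
  have hSnn : ∀ n x, 0 ≤ S n x := by
    intro n x
    have : 0 ≤ ∑ k, (D (p k) n x + D (m k) n x) :=
      Finset.sum_nonneg fun k _ => add_nonneg (hDnn _ _ _) (hDnn _ _ _)
    have := hDnn 1 n x; have := hDnn q n x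
    simp only [hSdef]; positivity
  -- key pointwise estimate
  have key : ∃ C : ℝ, 0 < C ∧ ∀ n (x : X), |T n f x - f x| ≤ ε₀ / 2 + C * S n x := by
    set ε : ℝ := ε₀ / 2 with hεdef
    have hε : 0 < ε := by positivity
    obtain ⟨δ, hδ0, hδ⟩ := Metric.uniformContinuous_iff.mp
      (CompactSpace.uniformContinuous_of_continuous f.continuous) ε hε
    set K : ℝ := 2 * M / δ ^ 2 with hKdef
    have hK0 : 0 ≤ K := by positivity
    have hKδ : K * δ ^ 2 = 2 * M := by
      rw [hKdef]; field_simp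
    have hf2 : ∀ x y : X, |f x - f y| ≤
        ε + K * ∑ k, ((x : Fin N → ℝ) k - (y : Fin N → ℝ) k) ^ 2 := by
      intro x y
      have hSgnn : 0 ≤ ∑ k, ((x : Fin N → ℝ) k - (y : Fin N → ℝ) k) ^ 2 :=
        Finset.sum_nonneg fun k _ => sq_nonneg _
      by_cases hcase : (∑ k, ((x : Fin N → ℝ) k - (y : Fin N → ℝ) k) ^ 2) < δ ^ 2
      · have hdist : dist x y < δ := by
          rw [Subtype.dist_eq, dist_pi_lt_iff hδ0]
          intro k
          have hterm : ((x : Fin N → ℝ) k - (y : Fin N → ℝ) k) ^ 2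
              ≤ ∑ j, ((x : Fin N → ℝ) j - (y : Fin N → ℝ) j) ^ 2 :=
            Finset.single_le_sum (f := fun j => ((x : Fin N → ℝ) j - (y : Fin N → ℝ) j) ^ 2)
              (fun j _ => sq_nonneg _) (Finset.mem_univ k)
          rw [Real.dist_eq]
          nlinarith [abs_nonneg ((x : Fin N → ℝ) k - (y : Fin N → ℝ) k),
            sq_abs ((x : Fin N → ℝ) k - (y : Fin N → ℝ) k)]
        have := hδ hdist
        rw [Real.dist_eq] at this
        nlinarith [mul_nonneg hK0 hSgnn]
      · push_neg at hcase
        have h2M : |f x - f y| ≤ 2 * M := by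
          have h1 := hfM x; have h2 := hfM y
          have := abs_sub_abs_le_abs_sub (f x) (f y)
          have habs := abs_sub (f x) (f y)
          linarith [habs]
        have hKs : 2 * M ≤ K * ∑ k, ((x : Fin N → ℝ) k - (y : Fin N → ℝ) k) ^ 2 := by
          calc 2 * M = K * δ ^ 2 := hKδ.symm
            _ ≤ K * ∑ k, ((x : Fin N → ℝ) k - (y : Fin N → ℝ) k) ^ 2 :=
              mul_le_mul_of_nonneg_left hcase hK0
        linarith
    refine ⟨ε + M + K + 2 * R * K + K * (N : ℝ) * R ^ 2 + 1, by positivity, ?_⟩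
    intro n x₀
    have haM : 0 ≤ f x₀ + M := by have := abs_le.mp (hfM x₀); linarith [this.1]
    set s : ℝ := ∑ k, ((x₀ : Fin N → ℝ) k) ^ 2 with hsdef2
    have hsnn : 0 ≤ s := Finset.sum_nonneg fun k _ => sq_nonneg _
    have hsle : s ≤ (N : ℝ) * R ^ 2 := by
      calc s ≤ ∑ _k : Fin N, R ^ 2 := Finset.sum_le_sum fun k _ => by
            have := hR k x₀
            nlinarith [sq_abs ((x₀ : Fin N → ℝ) k), abs_nonneg ((x₀ : Fin N → ℝ) k)]
        _ = (N : ℝ) * R ^ 2 := by simp [Finset.sum_const, nsmul_eq_mul]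
    -- the auxiliary continuous function h_{x₀}
    set w : Fin N → C(X, ℝ) := fun k =>
      (R - (x₀ : Fin N → ℝ) k) • p k + (R + (x₀ : Fin N → ℝ) k) • m k with hwdef
    set h : C(X, ℝ) := q + (∑ k, w k) + s • 1 with hhdef
    have hhval : ∀ t : X, h t = ∑ k, ((t : Fin N → ℝ) k - (x₀ : Fin N → ℝ) k) ^ 2 := by
      intro t
      have hcomb : (∑ k, ((t : Fin N → ℝ) k - (x₀ : Fin N → ℝ) k) ^ 2)
          = (∑ k, ((t : Fin N → ℝ) k) ^ 2)
            + (∑ k, ((R - (x₀ : Fin N → ℝ) k) * (t : Fin N → ℝ) k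
                + (R + (x₀ : Fin N → ℝ) k) * (-(t : Fin N → ℝ) k)))
            + ∑ k, ((x₀ : Fin N → ℝ) k) ^ 2 := by
        rw [← Finset.sum_add_distrib, ← Finset.sum_add_distrib]
        exact Finset.sum_congr rfl fun k _ => by ring
      simp only [hhdef, ContinuousMap.add_apply, ContinuousMap.sum_apply,
        ContinuousMap.smul_apply, ContinuousMap.one_apply, smul_eq_mul, hwdef, hmdef,
        ContinuousMap.neg_apply, hqdef, hpdef, ContinuousMap.coe_mk, hsdef2, mul_one]
      rw [hcomb]
    -- pointwise inequalities
    have hup : f + M • (1 : C(X, ℝ)) ≤ K • h + (f x₀ + M + ε) • 1 := by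
      rw [ContinuousMap.le_def]
      intro t
      have h2 := hf2 t x₀
      have hhv := hhval t
      simp only [ContinuousMap.add_apply, ContinuousMap.smul_apply, ContinuousMap.one_apply,
        smul_eq_mul, mul_one]
      rw [hhv]
      have hle := le_abs_self (f t - f x₀)
      linarith
    have hlow : (f x₀ + M) • (1 : C(X, ℝ)) ≤ (f + (M + ε) • 1) + K • h := by
      rw [ContinuousMap.le_def]
      intro t
      have h2 := hf2 t x₀
      have hhv := hhval t
      simp only [ContinuousMap.add_apply, ContinuousMap.smul_apply, ContinuousMap.one_apply,
        smul_eq_mul, mul_one]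
      rw [hhv]
      have hle := neg_abs_le (f t - f x₀)
      linarith
    -- operator chains, evaluated at x₀
    have E1 : T n (f + M • 1) x₀ = T n f x₀ + M * T n 1 x₀ := by
      have := DFunLike.congr_fun (htrans n f M hM0) x₀
      simpa using this
    have E2 : T n (K • h + (f x₀ + M + ε) • 1) x₀ = K * T n h x₀ + (f x₀ + M + ε) * T n 1 x₀ := by
      have e := htrans n (K • h) (f x₀ + M + ε) (by linarith)
      rw [hhom n K hK0 h] at e
      have := DFunLike.congr_fun e x₀
      simpa using this
    have I1 := ContinuousMap.le_def.mp (hmono n _ _ hup) x₀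
    rw [E1, E2] at I1
    have upper : T n f x₀ ≤ K * T n h x₀ + f x₀ * T n 1 x₀ + ε * T n 1 x₀ := by
      linarith [I1]
    have E3 : T n ((f x₀ + M) • 1) x₀ = (f x₀ + M) * T n 1 x₀ := by
      have := DFunLike.congr_fun (hhom n (f x₀ + M) haM 1) x₀
      simpa using this
    have E4 : T n ((f + (M + ε) • 1) + K • h) x₀ ≤
        T n f x₀ + (M + ε) * T n 1 x₀ + K * T n h x₀ := by
      have e4 := ContinuousMap.le_def.mp (hsubadd n (f + (M + ε) • 1) (K • h)) x₀
      have e5 := DFunLike.congr_fun (htrans n f (M + ε) (by linarith)) x₀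
      have e6 := DFunLike.congr_fun (hhom n K hK0 h) x₀
      simp only [ContinuousMap.add_apply, ContinuousMap.smul_apply, smul_eq_mul] at e4 e5 e6
      rw [e5, e6] at e4
      linarith
    have I2 := ContinuousMap.le_def.mp (hmono n _ _ hlow) x₀
    rw [E3] at I2
    have lower : f x₀ * T n 1 x₀ - ε * T n 1 x₀ - K * T n h x₀ ≤ T n f x₀ := by
      have := I2.trans E4
      linarith [this]
    -- bound on T n h x₀
    have hTh : T n h x₀ ≤ D q n x₀ + 2 * R * (∑ k, (D (p k) n x₀ + D (m k) n x₀))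
        + (N : ℝ) * R ^ 2 * D 1 n x₀ := by
      have d1 := ContinuousMap.le_def.mp (hsubadd n (q + ∑ k, w k) (s • 1)) x₀
      have d2 := ContinuousMap.le_def.mp (hsubadd n q (∑ k, w k)) x₀
      have d3 := ContinuousMap.le_def.mp
        (T_sum_le' (T n) (hT0 n) (hsubadd n) Finset.univ w) x₀
      have d5 := DFunLike.congr_fun (hhom n s hsnn 1) x₀
      simp only [ContinuousMap.add_apply, ContinuousMap.smul_apply, smul_eq_mul,
        ContinuousMap.sum_apply] at d1 d2 d3 d5
      -- termwise bound on the sum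
      have d4 : ∀ k : Fin N, T n (w k) x₀ ≤
          -2 * ((x₀ : Fin N → ℝ) k) ^ 2 + 2 * R * (D (p k) n x₀ + D (m k) n x₀) := by
        intro k
        have hRk := abs_le.mp (hR k x₀)
        have e7 := ContinuousMap.le_def.mp
          (hsubadd n ((R - (x₀ : Fin N → ℝ) k) • p k) ((R + (x₀ : Fin N → ℝ) k) • m k)) x₀
        have e8 := DFunLike.congr_fun (hhom n (R - (x₀ : Fin N → ℝ) k) (by linarith) (p k)) x₀
        have e9 := DFunLike.congr_fun (hhom n (R + (x₀ : Fin N → ℝ) k) (by linarith) (m k)) x₀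
        simp only [ContinuousMap.add_apply, ContinuousMap.smul_apply, smul_eq_mul] at e7 e8 e9
        rw [e8, e9] at e7
        have hDp : T n (p k) x₀ ≤ (x₀ : Fin N → ℝ) k + D (p k) n x₀ := by
          have h1 := le_abs_self (T n (p k) x₀ - p k x₀)
          have h2 : p k x₀ = (x₀ : Fin N → ℝ) k := rfl
          simp only [hDdef]
          linarith [h1, h2 ▸ h1]
        have hDm : T n (m k) x₀ ≤ -((x₀ : Fin N → ℝ) k) + D (m k) n x₀ := by
          have h1 := le_abs_self (T n (m k) x₀ - m k x₀)
          have h2 : m k x₀ = -((x₀ : Fin N → ℝ) k) := rfl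
          simp only [hDdef]
          linarith [h2 ▸ h1]
        have hDpnn := hDnn (p k) n x₀
        have hDmnn := hDnn (m k) n x₀
        have b1 : (R - (x₀ : Fin N → ℝ) k) * T n (p k) x₀ ≤
            (R - (x₀ : Fin N → ℝ) k) * ((x₀ : Fin N → ℝ) k + D (p k) n x₀) :=
          mul_le_mul_of_nonneg_left hDp (by linarith)
        have b2 : (R + (x₀ : Fin N → ℝ) k) * T n (m k) x₀ ≤
            (R + (x₀ : Fin N → ℝ) k) * (-((x₀ : Fin N → ℝ) k) + D (m k) n x₀) :=
          mul_le_mul_of_nonneg_left hDm (by linarith)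
        have hwk : T n (w k) x₀ ≤ (R - (x₀ : Fin N → ℝ) k) * T n (p k) x₀
            + (R + (x₀ : Fin N → ℝ) k) * T n (m k) x₀ := by
          rw [hwdef]; exact e7
        have hb3 : 0 ≤ (R + (x₀ : Fin N → ℝ) k) * D (p k) n x₀ :=
          mul_nonneg (by linarith) hDpnn
        have hb4 : 0 ≤ (R - (x₀ : Fin N → ℝ) k) * D (m k) n x₀ :=
          mul_nonneg (by linarith) hDmnn
        nlinarith [hwk, b1, b2, hb3, hb4]
      have dsum : ∑ k, T n (w k) x₀ ≤
          ∑ k, (-2 * ((x₀ : Fin N → ℝ) k) ^ 2 + 2 * R * (D (p k) n x₀ + D (m k) n x₀)) :=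
        Finset.sum_le_sum fun k _ => d4 k
      have dsum2 : ∑ k, (-2 * ((x₀ : Fin N → ℝ) k) ^ 2 + 2 * R * (D (p k) n x₀ + D (m k) n x₀))
          = -2 * s + 2 * R * ∑ k, (D (p k) n x₀ + D (m k) n x₀) := by
        rw [Finset.sum_add_distrib, ← Finset.mul_sum, ← Finset.mul_sum, hsdef2]
      have hqx : q x₀ = s := by rw [hsdef2]; rfl
      have hDq : T n q x₀ ≤ q x₀ + D q n x₀ := by
        have h1 := le_abs_self (T n q x₀ - q x₀)
        simp only [hDdef]; linarith
      have hD1 : T n 1 x₀ ≤ 1 + D 1 n x₀ := by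
        have h1 := le_abs_self (T n 1 x₀ - (1 : C(X, ℝ)) x₀)
        have h2 : (1 : C(X, ℝ)) x₀ = 1 := rfl
        simp only [hDdef, ContinuousMap.one_apply]; rw [h2] at h1; linarith
      have hs1 : s * T n 1 x₀ ≤ s + (N : ℝ) * R ^ 2 * D 1 n x₀ := by
        have b3 : s * T n 1 x₀ ≤ s * (1 + D 1 n x₀) := mul_le_mul_of_nonneg_left hD1 hsnn
        have b4 : s * D 1 n x₀ ≤ (N : ℝ) * R ^ 2 * D 1 n x₀ :=
          mul_le_mul_of_nonneg_right hsle (hDnn 1 n x₀)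
        nlinarith [b3, b4]
      have hfinal : T n h x₀ ≤ T n q x₀ + (∑ k, T n (w k) x₀) + s * T n 1 x₀ := by
        rw [hhdef]
        calc T n (q + (∑ k, w k) + s • 1) x₀
            ≤ T n (q + ∑ k, w k) x₀ + T n (s • 1) x₀ := d1
          _ ≤ T n q x₀ + T n (∑ k, w k) x₀ + T n (s • 1) x₀ := by linarith
          _ ≤ T n q x₀ + (∑ k, T n (w k) x₀) + s * T n 1 x₀ := by
              linarith [d3, d5]
      rw [dsum2] at dsum
      linarith [hfinal, hDq, hqx ▸ hDq, hs1, dsum]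
    -- combine everything
    set t1 : ℝ := T n 1 x₀ with ht1def
    set Th : ℝ := T n h x₀ with hThdef
    have habs1 : |T n f x₀ - f x₀ * t1| ≤ ε * t1 + K * Th := by
      rw [abs_le]; constructor
      · linarith [lower]
      · linarith [upper]
    have habs2 : |f x₀ * t1 - f x₀| ≤ M * D 1 n x₀ := by
      have : f x₀ * t1 - f x₀ = f x₀ * (t1 - 1) := by ring
      rw [this, abs_mul]
      have hD1e : D 1 n x₀ = |t1 - 1| := by
        have h2 : (1 : C(X, ℝ)) x₀ = 1 := rfl
        simp only [hDdef, ht1def, h2]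
      rw [hD1e]
      exact mul_le_mul_of_nonneg_right (hfM x₀) (abs_nonneg _)
    have htri : |T n f x₀ - f x₀| ≤ |T n f x₀ - f x₀ * t1| + |f x₀ * t1 - f x₀| :=
      abs_sub_le _ _ _
    have hεt1 : ε * t1 ≤ ε + ε * D 1 n x₀ := by
      have hD1 : t1 ≤ 1 + D 1 n x₀ := by
        have h1 := le_abs_self (T n 1 x₀ - (1 : C(X, ℝ)) x₀)
        have h2 : (1 : C(X, ℝ)) x₀ = 1 := rfl
        simp only [hDdef, ContinuousMap.one_apply]; rw [h2] at h1; rw [ht1def]; linarith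
      have := mul_le_mul_of_nonneg_left hD1 hε.le
      linarith
    have hKTh : K * Th ≤ K * (D q n x₀ + 2 * R * (∑ k, (D (p k) n x₀ + D (m k) n x₀))
        + (N : ℝ) * R ^ 2 * D 1 n x₀) := mul_le_mul_of_nonneg_left hTh hK0
    set C : ℝ := ε + M + K + 2 * R * K + K * (N : ℝ) * R ^ 2 + 1 with hCdef
    have hSgD : 0 ≤ ∑ k, (D (p k) n x₀ + D (m k) n x₀) :=
      Finset.sum_nonneg fun k _ => add_nonneg (hDnn _ _ _) (hDnn _ _ _)
    have hD1nn := hDnn 1 n x₀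
    have hDqnn := hDnn q n x₀
    have hNR : 0 ≤ K * (N : ℝ) * R ^ 2 := by positivity
    have hcc1 : ε + M + K * (N : ℝ) * R ^ 2 ≤ C := by
      rw [hCdef]; nlinarith [mul_nonneg hR0.le hK0]
    have hcc2 : K ≤ C := by
      rw [hCdef]; nlinarith [mul_nonneg hR0.le hK0, hNR]
    have hcc3 : 2 * R * K ≤ C := by
      rw [hCdef]; nlinarith [mul_nonneg hR0.le hK0, hNR]
    have c1 : (ε + M + K * (N : ℝ) * R ^ 2) * D 1 n x₀ ≤ C * D 1 n x₀ :=
      mul_le_mul_of_nonneg_right hcc1 hD1nn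
    have c2 : K * D q n x₀ ≤ C * D q n x₀ :=
      mul_le_mul_of_nonneg_right hcc2 hDqnn
    have c3 : (2 * R * K) * (∑ k, (D (p k) n x₀ + D (m k) n x₀)) ≤
        C * (∑ k, (D (p k) n x₀ + D (m k) n x₀)) :=
      mul_le_mul_of_nonneg_right hcc3 hSgD
    have hCS : C * S n x₀ = C * D 1 n x₀ + C * D q n x₀
        + C * (∑ k, (D (p k) n x₀ + D (m k) n x₀)) := by
      simp only [hSdef]; ring
    have hεε : ε₀ / 2 = ε := hεdef.symm
    linarith [htri, habs1, habs2, hεt1, hKTh, hCS, c1, c2, c3]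
  obtain ⟨C, hC0, hkey⟩ := key
  -- measure part
  set δ₁ : ℝ := ε₀ / (2 * C * (2 * N + 2)) with hδ₁def
  have hδ₁0 : 0 < δ₁ := by
    apply div_pos hε₀; positivity
  have hsub : ∀ n, {x : X | ε₀ ≤ |T n f x - f x|} ⊆
      ({x : X | δ₁ ≤ D 1 n x} ∪ {x : X | δ₁ ≤ D q n x}) ∪
        ⋃ k : Fin N, ({x : X | δ₁ ≤ D (p k) n x} ∪ {x : X | δ₁ ≤ D (m k) n x}) := by
    intro n x hx
    have hx' : ε₀ ≤ |T n f x - f x| := hx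
    by_contra hnot
    simp only [mem_union, mem_iUnion, mem_setOf_eq, not_or, not_le, not_exists] at hnot
    obtain ⟨⟨h1, h2⟩, h3⟩ := hnot
    have hsum : ∑ k, (D (p k) n x + D (m k) n x) ≤ (N : ℝ) * (2 * δ₁) := by
      calc ∑ k, (D (p k) n x + D (m k) n x) ≤ ∑ _k : Fin N, 2 * δ₁ :=
            Finset.sum_le_sum fun k _ => by
              obtain ⟨hk1, hk2⟩ := h3 k; linarith
        _ = (N : ℝ) * (2 * δ₁) := by simp [Finset.sum_const, nsmul_eq_mul]
    have hS : S n x < (2 * (N : ℝ) + 2) * δ₁ := by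
      simp only [hSdef]; linarith
    have hCδ : C * ((2 * (N : ℝ) + 2) * δ₁) = ε₀ / 2 := by
      rw [hδ₁def]
      field_simp
    have h4 : C * S n x < ε₀ / 2 := hCδ ▸ mul_lt_mul_of_pos_left hS hC0
    linarith [hkey n x]
  have hbound : ∀ n, μ {x : X | ε₀ ≤ |T n f x - f x|} ≤
      (μ {x : X | δ₁ ≤ D 1 n x} + μ {x : X | δ₁ ≤ D q n x}) +
        ∑ k : Fin N, (μ {x : X | δ₁ ≤ D (p k) n x} + μ {x : X | δ₁ ≤ D (m k) n x}) := by
    intro n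
    refine (measure_mono (hsub n)).trans ?_
    refine (measure_union_le _ _).trans ?_
    refine add_le_add (measure_union_le _ _) ?_
    refine (measure_iUnion_fintype_le _ _).trans ?_
    exact Finset.sum_le_sum fun k _ => measure_union_le _ _
  -- each test error tends to 0 in measure
  have h1lim : Tendsto (fun n => μ {x : X | δ₁ ≤ D 1 n x}) atTop (𝓝 0) := by
    have := htest 1 (Or.inl (by ext x; simp)) δ₁ hδ₁0
    simpa [hDdef] using this
  have hqlim : Tendsto (fun n => μ {x : X | δ₁ ≤ D q n x}) atTop (𝓝 0) := by
    have := htest q (Or.inr (Or.inr (Or.inr (by ext x; simp [hqdef])))) δ₁ hδ₁0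
    simpa [hDdef] using this
  have hplim : ∀ k, Tendsto (fun n => μ {x : X | δ₁ ≤ D (p k) n x}) atTop (𝓝 0) := by
    intro k
    have := htest (p k) (Or.inr (Or.inl ⟨k, by ext x; simp [hpdef]⟩)) δ₁ hδ₁0
    simpa [hDdef] using this
  have hmlim : ∀ k, Tendsto (fun n => μ {x : X | δ₁ ≤ D (m k) n x}) atTop (𝓝 0) := by
    intro k
    have := htest (m k) (Or.inr (Or.inr (Or.inl ⟨k, by ext x; simp [hmdef, hpdef]⟩))) δ₁ hδ₁0
    simpa [hDdef] using this
  have hsumlim : Tendsto (fun n =>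
      (μ {x : X | δ₁ ≤ D 1 n x} + μ {x : X | δ₁ ≤ D q n x}) +
        ∑ k : Fin N, (μ {x : X | δ₁ ≤ D (p k) n x} + μ {x : X | δ₁ ≤ D (m k) n x}))
      atTop (𝓝 0) := by
    have hs : Tendsto (fun n => ∑ k : Fin N,
        (μ {x : X | δ₁ ≤ D (p k) n x} + μ {x : X | δ₁ ≤ D (m k) n x})) atTop (𝓝 0) := by
      have := tendsto_finset_sum (Finset.univ : Finset (Fin N))
        (fun k _ => ((hplim k).add (hmlim k) : _))
      simpa using this
    simpa using ((h1lim.add hqlim).add hs)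
  exact tendsto_of_tendsto_of_tendsto_of_le_of_le tendsto_const_nhds hsumlim
    (fun n => by simp) hbound
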